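/- Let P_4 denote the path with four vertices and three edges, and P_3 the path with three vertices and two edges. For each ε > 0 there exists δ > 0 such that the following holds for all sufficiently large n. If a 2-coloring of the edges of the blowup P_4[n], with parts V_1, V_2, V_3, V_4 along the path, contains at most δ n³ monochromatic canonical copies of P_3, then there exist colors c_1, c_2, c_3 with c_1 ≠ c_2 and c_2 ≠ c_3 such that, apart from at most ε n² edges in total, every edge between V_i and V_{i+1} has color c_i for i = 1, 2, 3 (i.e., the coloring is monochromatic between consecutive parts and alternates color along the path). -/

import Mathlib

open Finset

set_option maxHeartbeats 1600000

namespace P4BlowupStability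

/-- number of indices where `x` takes the value `k` -/
def cnt {n : ℕ} (x : Fin n → Fin 2) (k : Fin 2) : ℕ := (univ.filter fun a => x a = k).card

lemma cnt_le {n : ℕ} (x : Fin n → Fin 2) (k : Fin 2) : cnt x k ≤ n := by
  simpa [cnt] using (Finset.card_filter_le univ fun a => x a = k)

lemma cnt_add {n : ℕ} (x : Fin n → Fin 2) : cnt x 0 + cnt x 1 = n := by
  have h : (univ.filter fun a => x a = 1) = (univ.filter fun a => ¬ x a = 0) := by
    apply Finset.filter_congr
    intro a _
    have : ∀ v : Fin 2, (v = 1) ↔ ¬ v = 0 := by decide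
    simpa using this (x a)
  rw [cnt, cnt, h]
  simpa using Finset.card_filter_add_card_filter_not
    (s := (univ : Finset (Fin n))) (p := fun a => x a = 0)

lemma cnt_eq_sum {n : ℕ} (x : Fin n → Fin 2) (k : Fin 2) :
    cnt x k = ∑ a, if x a = k then 1 else 0 := by
  rw [cnt, Finset.card_filter]

lemma sum_pair {n : ℕ} (x y : Fin n → Fin 2) :
    ∑ a, ∑ c, (if x a = y c then (1:ℕ) else 0)
      = cnt x 0 * cnt y 0 + cnt x 1 * cnt y 1 := by
  have inner : ∀ a, (∑ c, if x a = y c then (1:ℕ) else 0) = cnt y (x a) := by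
    intro a
    rw [cnt_eq_sum]
    exact Finset.sum_congr rfl fun c _ => by simp [eq_comm]
  have h1 : ∀ v : Fin 2, ¬ v = 0 → v = 1 := by decide
  have h2 : (univ.filter fun a => ¬ x a = 0) = (univ.filter fun a => x a = 1) := by
    apply Finset.filter_congr
    intro a _
    have : ∀ v : Fin 2, (¬ v = 0) ↔ v = 1 := by decide
    simpa using this (x a)
  calc ∑ a, ∑ c, (if x a = y c then (1:ℕ) else 0) = ∑ a, cnt y (x a) :=
        Finset.sum_congr rfl fun a _ => inner a
    _ = ∑ a ∈ univ.filter (fun a => x a = 0), cnt y (x a)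
        + ∑ a ∈ univ.filter (fun a => ¬ x a = 0), cnt y (x a) :=
        (Finset.sum_filter_add_sum_filter_not _ _ _).symm
    _ = cnt x 0 * cnt y 0 + cnt x 1 * cnt y 1 := by
        congr 1
        · rw [Finset.sum_congr rfl (fun a ha => by
            rw [(Finset.mem_filter.mp ha).2] : ∀ a ∈ _, cnt y (x a) = cnt y 0),
            Finset.sum_const, smul_eq_mul]
          rfl
        · rw [Finset.sum_congr rfl (fun a ha => by
            rw [h1 _ (Finset.mem_filter.mp ha).2] : ∀ a ∈ _, cnt y (x a) = cnt y 1),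
            Finset.sum_const, smul_eq_mul, h2]
          rfl

lemma key_count (n r0 r1 s0 s1 : ℕ) (hr : r0 + r1 = n) (hs : s0 + s1 = n) :
    n * min (r1 + s0) (r0 + s1) ≤ 4 * (r0 * s0 + r1 * s1) := by
  rcases le_total (r1 + s0) (r0 + s1) with h | h
  · rw [min_eq_left h]
    nlinarith [two_mul_le_add_sq r1 s0, Nat.mul_le_mul_right (r1+s0) h]
  · rw [min_eq_right h]
    nlinarith [two_mul_le_add_sq r0 s1, Nat.mul_le_mul_right (r0+s1) h]

/-- number of "wrong" edges at the middle vertex `b`, for the alternating pattern whose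
first color is `q` (so the left edges should be `q`, the right edges `q+1`). -/
def wr {n : ℕ} (g1 g2 : Fin n → Fin n → Fin 2) (q : Fin 2) (b : Fin n) : ℕ :=
  cnt (fun a => g1 a b) (q+1) + cnt (fun c => g2 b c) q

/-- the better of the two alternating patterns at the middle vertex `b` -/
def pat {n : ℕ} (g1 g2 : Fin n → Fin n → Fin 2) (b : Fin n) : Fin 2 :=
  if wr g1 g2 0 b ≤ wr g1 g2 1 b then 0 else 1

lemma wr_pat_min {n : ℕ} (g1 g2 : Fin n → Fin n → Fin 2) (b : Fin n) :
    wr g1 g2 (pat g1 g2 b) b = min (wr g1 g2 0 b) (wr g1 g2 1 b) := by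
  unfold pat
  split
  · rw [min_eq_left ‹_›]
  · rw [min_eq_right (le_of_not_ge ‹_›)]

lemma key1 {n : ℕ} (g1 g2 : Fin n → Fin n → Fin 2) (b : Fin n) :
    n * wr g1 g2 (pat g1 g2 b) b ≤ 4 * ∑ a, ∑ c, (if g1 a b = g2 b c then (1:ℕ) else 0) := by
  rw [sum_pair, wr_pat_min]
  have h01 : ((0:Fin 2)+1) = 1 := rfl
  have h11 : ((1:Fin 2)+1) = 0 := rfl
  unfold wr
  rw [h01, h11]
  exact key_count n _ _ _ _ (cnt_add _) (cnt_add _)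

lemma main_abs {n : ℕ} (g1 g2 g3 : Fin n → Fin n → Fin 2) :
    ∃ q : Fin 2,
      n * ((∑ b, cnt (fun a => g1 a b) (q+1)) + (∑ b, cnt (fun w => g2 b w) q)
           + (∑ w, cnt (fun z => g3 w z) (q+1)))
      ≤ 48 * ((∑ b, ∑ a, ∑ c, (if g1 a b = g2 b c then (1:ℕ) else 0))
            + (∑ w, ∑ b, ∑ z, (if g2 b w = g3 w z then (1:ℕ) else 0))) := by
  set M1 := ∑ b, ∑ a, ∑ c, (if g1 a b = g2 b c then (1:ℕ) else 0) with hM1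
  set M2 := ∑ w, ∑ b, ∑ z, (if g2 b w = g3 w z then (1:ℕ) else 0) with hM2
  set S1 := ∑ b, wr g1 g2 (pat g1 g2 b) b with hS1
  set S2 := ∑ w, wr g2 g3 (pat g2 g3 w) w with hS2
  have hS1le : n * S1 ≤ 4 * M1 := by
    rw [hS1, hM1, Finset.mul_sum, Finset.mul_sum]
    exact Finset.sum_le_sum fun b _ => key1 g1 g2 b
  have hS2le : n * S2 ≤ 4 * M2 := by
    rw [hS2, hM2, Finset.mul_sum, Finset.mul_sum]
    exact Finset.sum_le_sum fun w _ => key1 g2 g3 w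
  set Q := ∑ b, ∑ w, (if pat g1 g2 b = pat g2 g3 w then (1:ℕ) else 0) with hQ
  have hQeq : Q = cnt (pat g1 g2) 0 * cnt (pat g2 g3) 0
      + cnt (pat g1 g2) 1 * cnt (pat g2 g3) 1 := sum_pair _ _
  have hQle : n * Q ≤ 4 * M1 + 4 * M2 := by
    have point : ∀ b w, (if pat g1 g2 b = pat g2 g3 w then (1:ℕ) else 0)
        ≤ (if g2 b w = pat g1 g2 b then 1 else 0)
          + (if g2 b w = pat g2 g3 w + 1 then 1 else 0) := by
      intro b w
      have h : ∀ u v v' : Fin 2, (if v = v' then (1:ℕ) else 0)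
          ≤ (if u = v then 1 else 0) + (if u = v' + 1 then 1 else 0) := by decide
      exact h (g2 b w) _ _
    have h1 : Q ≤ (∑ b, ∑ w, if g2 b w = pat g1 g2 b then (1:ℕ) else 0)
        + (∑ b, ∑ w, if g2 b w = pat g2 g3 w + 1 then (1:ℕ) else 0) := by
      rw [hQ, ← Finset.sum_add_distrib]
      refine Finset.sum_le_sum fun b _ => ?_
      rw [← Finset.sum_add_distrib]
      exact Finset.sum_le_sum fun w _ => point b w
    have h2 : (∑ b, ∑ w, if g2 b w = pat g1 g2 b then (1:ℕ) else 0) ≤ S1 := by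
      rw [hS1]
      refine Finset.sum_le_sum fun b _ => ?_
      rw [← cnt_eq_sum]
      simp only [wr]
      exact Nat.le_add_left _ _
    have h3 : (∑ b, ∑ w, if g2 b w = pat g2 g3 w + 1 then (1:ℕ) else 0) ≤ S2 := by
      rw [Finset.sum_comm, hS2]
      refine Finset.sum_le_sum fun w _ => ?_
      rw [← cnt_eq_sum]
      simp only [wr]
      exact Nat.le_add_right _ _
    calc n * Q ≤ n * (S1 + S2) :=
          Nat.mul_le_mul_left _ (le_trans h1 (Nat.add_le_add h2 h3))
      _ = n * S1 + n * S2 := by ring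
      _ ≤ 4 * M1 + 4 * M2 := Nat.add_le_add hS1le hS2le
  have hBadd := cnt_add (pat g1 g2)
  have hWadd := cnt_add (pat g2 g3)
  by_cases hdeg : n^2 ≤ 4 * Q
  · refine ⟨0, ?_⟩
    have hnn : (∑ _b : Fin n, n) = n * n := by simp [Finset.sum_const, mul_comm]
    have t1 : (∑ b, cnt (fun a => g1 a b) ((0:Fin 2)+1)) ≤ n * n :=
      le_trans (Finset.sum_le_sum fun b _ => cnt_le _ _) (le_of_eq hnn)
    have t2 : (∑ b, cnt (fun w => g2 b w) (0:Fin 2)) ≤ n * n :=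
      le_trans (Finset.sum_le_sum fun b _ => cnt_le _ _) (le_of_eq hnn)
    have t3 : (∑ w, cnt (fun z => g3 w z) ((0:Fin 2)+1)) ≤ n * n :=
      le_trans (Finset.sum_le_sum fun w _ => cnt_le _ _) (le_of_eq hnn)
    have hA : n * ((∑ b, cnt (fun a => g1 a b) ((0:Fin 2)+1))
        + (∑ b, cnt (fun w => g2 b w) (0:Fin 2))
        + (∑ w, cnt (fun z => g3 w z) ((0:Fin 2)+1)))
        ≤ n * (3 * (n * n)) := Nat.mul_le_mul_left _ (by omega)
    nlinarith [hA, hQle, Nat.mul_le_mul_left n hdeg]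
  · push_neg at hdeg
    have hq2 : ∀ u v : Fin 2, u = v ∨ u = v + 1 := by decide
    have hne : ∀ v : Fin 2, ¬ (v = v + 1) := by decide
    have hne' : ∀ v : Fin 2, ¬ (v + 1 = v) := by decide
    have hmaj : ∃ q : Fin 2, n * cnt (pat g1 g2) (q+1) ≤ 2*Q ∧ n * cnt (pat g2 g3) q ≤ 2*Q := by
      rcases (by omega : n ≤ 2 * cnt (pat g1 g2) 0 ∨ n ≤ 2 * cnt (pat g1 g2) 1) with hB | hB
      · have hW0 : 2 * cnt (pat g2 g3) 0 < n := by
          by_contra hcon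
          push_neg at hcon
          nlinarith [hQeq]
        have hW1 : n ≤ 2 * cnt (pat g2 g3) 1 := by omega
        refine ⟨0, ?_, ?_⟩
        · rw [show ((0:Fin 2)+1) = 1 from rfl]
          nlinarith [hQeq]
        · nlinarith [hQeq]
      · have hW1 : 2 * cnt (pat g2 g3) 1 < n := by
          by_contra hcon
          push_neg at hcon
          nlinarith [hQeq]
        have hW0 : n ≤ 2 * cnt (pat g2 g3) 0 := by omega
        refine ⟨1, ?_, ?_⟩
        · rw [show ((1:Fin 2)+1) = 0 from rfl]
          nlinarith [hQeq]
        · nlinarith [hQeq]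
    obtain ⟨q, hBm, hWm⟩ := hmaj
    refine ⟨q, ?_⟩
    have hT1 : ∀ b, cnt (fun a => g1 a b) (q+1)
        ≤ wr g1 g2 (pat g1 g2 b) b + n * (if pat g1 g2 b = q + 1 then 1 else 0) := by
      intro b
      rcases hq2 (pat g1 g2 b) q with h | h
      · rw [h, if_neg (hne q), mul_zero, add_zero]
        simp only [wr]
        exact Nat.le_add_right _ _
      · rw [h, if_pos rfl, mul_one]
        exact le_trans (cnt_le _ _) (Nat.le_add_left _ _)
    have hT2 : ∀ b, cnt (fun w => g2 b w) q
        ≤ wr g1 g2 (pat g1 g2 b) b + n * (if pat g1 g2 b = q + 1 then 1 else 0) := by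
      intro b
      rcases hq2 (pat g1 g2 b) q with h | h
      · rw [h, if_neg (hne q), mul_zero, add_zero]
        simp only [wr]
        exact Nat.le_add_left _ _
      · rw [h, if_pos rfl, mul_one]
        exact le_trans (cnt_le _ _) (Nat.le_add_left _ _)
    have hT3 : ∀ w, cnt (fun z => g3 w z) (q+1)
        ≤ wr g2 g3 (pat g2 g3 w) w + n * (if pat g2 g3 w = q then 1 else 0) := by
      intro w
      rcases hq2 (pat g2 g3 w) q with h | h
      · rw [h, if_pos rfl, mul_one]
        exact le_trans (cnt_le _ _) (Nat.le_add_left _ _)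
      · rw [h, if_neg (hne' q), mul_zero, add_zero]
        simp only [wr]
        exact Nat.le_add_left _ _
    have hG1 : (∑ b, cnt (fun a => g1 a b) (q+1)) ≤ S1 + n * cnt (pat g1 g2) (q+1) := by
      calc (∑ b, cnt (fun a => g1 a b) (q+1))
          ≤ ∑ b, (wr g1 g2 (pat g1 g2 b) b + n * (if pat g1 g2 b = q + 1 then 1 else 0)) :=
            Finset.sum_le_sum fun b _ => hT1 b
        _ = S1 + n * cnt (pat g1 g2) (q+1) := by
            rw [Finset.sum_add_distrib, ← Finset.mul_sum, ← cnt_eq_sum, ← hS1]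
    have hG2 : (∑ b, cnt (fun w => g2 b w) q) ≤ S1 + n * cnt (pat g1 g2) (q+1) := by
      calc (∑ b, cnt (fun w => g2 b w) q)
          ≤ ∑ b, (wr g1 g2 (pat g1 g2 b) b + n * (if pat g1 g2 b = q + 1 then 1 else 0)) :=
            Finset.sum_le_sum fun b _ => hT2 b
        _ = S1 + n * cnt (pat g1 g2) (q+1) := by
            rw [Finset.sum_add_distrib, ← Finset.mul_sum, ← cnt_eq_sum, ← hS1]
    have hG3 : (∑ w, cnt (fun z => g3 w z) (q+1)) ≤ S2 + n * cnt (pat g2 g3) q := by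
      calc (∑ w, cnt (fun z => g3 w z) (q+1))
          ≤ ∑ w, (wr g2 g3 (pat g2 g3 w) w + n * (if pat g2 g3 w = q then 1 else 0)) :=
            Finset.sum_le_sum fun w _ => hT3 w
        _ = S2 + n * cnt (pat g2 g3) q := by
            rw [Finset.sum_add_distrib, ← Finset.mul_sum, ← cnt_eq_sum, ← hS2]
    have hA : n * ((∑ b, cnt (fun a => g1 a b) (q+1)) + (∑ b, cnt (fun w => g2 b w) q)
        + (∑ w, cnt (fun z => g3 w z) (q+1)))
        ≤ n * (2 * S1 + S2 + 2 * (n * cnt (pat g1 g2) (q+1)) + n * cnt (pat g2 g3) q) :=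
      Nat.mul_le_mul_left _ (by omega)
    nlinarith [hA, hS1le, hS2le, hQle,
      Nat.mul_le_mul_left n hBm, Nat.mul_le_mul_left n hWm]

end P4BlowupStability

open P4BlowupStability in
theorem path_four_blowup_stability (ε : ℝ) (hε : 0 < ε) :
    ∃ δ : ℝ, 0 < δ ∧ ∃ N : ℕ, ∀ n : ℕ, N ≤ n →
      ∀ C : Sym2 (Fin 4 × Fin n) → Fin 2,
        -- few monochromatic canonical copies of `P₃`
        (Nat.card {x : Fin 2 × Fin n × Fin n × Fin n //
            C s((x.1.castLE (by norm_num), x.2.1),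
                (x.1.castLE (by norm_num) + 1, x.2.2.1)) =
            C s((x.1.castLE (by norm_num) + 1, x.2.2.1),
                (x.1.castLE (by norm_num) + 2, x.2.2.2))} : ℝ) ≤ δ * (n : ℝ) ^ 3 →
        -- the coloring is `c i` between consecutive parts, alternating, up to `ε n²` edges
        ∃ c : Fin 3 → Fin 2, c 0 ≠ c 1 ∧ c 1 ≠ c 2 ∧
          (Nat.card {y : Fin 3 × Fin n × Fin n //
              C s((y.1.castLE (by norm_num), y.2.1),
                  (y.1.castLE (by norm_num) + 1, y.2.2)) ≠ c y.1} : ℝ) ≤ ε * (n : ℝ) ^ 2 := by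
  refine ⟨ε / 48, by positivity, 1, fun n hn C hM => ?_⟩
  obtain ⟨q, hq⟩ := main_abs
    (fun a b => C s(((0:Fin 4), a), ((1:Fin 4), b)))
    (fun b w => C s(((1:Fin 4), b), ((2:Fin 4), w)))
    (fun w z => C s(((2:Fin 4), w), ((3:Fin 4), z)))
  have hMeq : (Nat.card {x : Fin 2 × Fin n × Fin n × Fin n //
        C s((x.1.castLE (by norm_num), x.2.1),
            (x.1.castLE (by norm_num) + 1, x.2.2.1)) =
        C s((x.1.castLE (by norm_num) + 1, x.2.2.1),
            (x.1.castLE (by norm_num) + 2, x.2.2.2))})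
      = (∑ b, ∑ a, ∑ c, if C s(((0:Fin 4), a), ((1:Fin 4), b))
            = C s(((1:Fin 4), b), ((2:Fin 4), c)) then 1 else 0)
      + (∑ w, ∑ b, ∑ z, if C s(((1:Fin 4), b), ((2:Fin 4), w))
            = C s(((2:Fin 4), w), ((3:Fin 4), z)) then 1 else 0) := by
    rw [Nat.card_eq_fintype_card, Fintype.card_subtype, Finset.card_filter]
    simp only [Fintype.sum_prod_type]
    rw [Fin.sum_univ_two]
    congr 1
    · rw [Finset.sum_comm]
      rfl
    · rw [Finset.sum_comm]
      rfl
  refine ⟨![q, q+1, q], ?_, ?_, ?_⟩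
  · have : ∀ v : Fin 2, v ≠ v + 1 := by decide
    simpa using this q
  · have : ∀ v : Fin 2, v + 1 ≠ v := by decide
    simpa using this q
  · have hCeq : (Nat.card {y : Fin 3 × Fin n × Fin n //
        C s((y.1.castLE (by norm_num), y.2.1),
            (y.1.castLE (by norm_num) + 1, y.2.2)) ≠ (![q, q+1, q]) y.1})
      = (∑ b, cnt (fun a => C s(((0:Fin 4), a), ((1:Fin 4), b))) (q+1))
      + (∑ b, cnt (fun w => C s(((1:Fin 4), b), ((2:Fin 4), w))) q)
      + (∑ w, cnt (fun z => C s(((2:Fin 4), w), ((3:Fin 4), z))) (q+1)) := by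
      have hiff1 : ∀ u v : Fin 2, (¬ u = v) ↔ (u = v + 1) := by decide
      have hiff2 : ∀ u v : Fin 2, (¬ u = v + 1) ↔ (u = v) := by decide
      rw [Nat.card_eq_fintype_card, Fintype.card_subtype, Finset.card_filter]
      simp only [Fintype.sum_prod_type]
      rw [Fin.sum_univ_three]
      simp only [Matrix.cons_val_zero, Matrix.cons_val_one, Matrix.head_cons,
        Matrix.cons_val_two, Matrix.tail_cons]
      congr 1
      congr 1
      · rw [Finset.sum_comm]
        refine Finset.sum_congr rfl fun b _ => ?_
        rw [cnt_eq_sum]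
        refine Finset.sum_congr rfl fun a _ => ?_
        exact if_congr (hiff1 _ _) rfl rfl
      · refine Finset.sum_congr rfl fun b _ => ?_
        rw [cnt_eq_sum]
        refine Finset.sum_congr rfl fun w _ => ?_
        exact if_congr (hiff2 _ _) rfl rfl
      · refine Finset.sum_congr rfl fun w _ => ?_
        rw [cnt_eq_sum]
        refine Finset.sum_congr rfl fun z _ => ?_
        exact if_congr (hiff1 _ _) rfl rfl
    rw [hCeq]
    rw [hMeq] at hM
    have hn' : (1:ℝ) ≤ (n:ℝ) := by exact_mod_cast hn
    have h1 : (n:ℝ) * (((∑ b, cnt (fun a => C s(((0:Fin 4), a), ((1:Fin 4), b))) (q+1))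
        + (∑ b, cnt (fun w => C s(((1:Fin 4), b), ((2:Fin 4), w))) q)
        + (∑ w, cnt (fun z => C s(((2:Fin 4), w), ((3:Fin 4), z))) (q+1)) : ℕ) : ℝ)
        ≤ 48 * (((∑ b, ∑ a, ∑ c, if C s(((0:Fin 4), a), ((1:Fin 4), b))
            = C s(((1:Fin 4), b), ((2:Fin 4), c)) then 1 else 0)
      + (∑ w, ∑ b, ∑ z, if C s(((1:Fin 4), b), ((2:Fin 4), w))
            = C s(((2:Fin 4), w), ((3:Fin 4), z)) then 1 else 0) : ℕ) : ℝ) := by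
      exact_mod_cast hq
    push_cast at hM h1 ⊢
    nlinarith [hε, hn', sq_nonneg (n:ℝ)]
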